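/- Let S be a P-polyhedral system with polyhedra P_j = S_j(P) for multiindices j ∈ I*. Then for multiindices i, j: P_j ⊆ P_i if and only if i is an initial segment of j (i ⊑ j). -/

import Mathlib

open Set

/-- `S` is a `P`-polyhedral system with vertex set `V`: the maps are contraction
similarities, each `Pᵢ = Sᵢ(P)` lies in `P`, distinct `Pᵢ, Pⱼ` meet in at most one
point which is then a common vertex, and every vertex of `P` is a vertex of some
`Pᵢ`. -/
def IsPPolyhedralSystem {d : ℕ} {ι : Type*} (P : Set (EuclideanSpace ℝ (Fin d)))
    (V : Finset (EuclideanSpace ℝ (Fin d)))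
    (S : ι → EuclideanSpace ℝ (Fin d) → EuclideanSpace ℝ (Fin d)) : Prop :=
  (∀ i, ∃ r ∈ Set.Ioo (0 : ℝ) 1, ∀ x y, dist (S i x) (S i y) = r * dist x y) ∧
  (∀ i, S i '' P ⊆ P) ∧
  (∀ i j, i ≠ j → (S i '' P ∩ S j '' P = ∅ ∨
    ∃ v, S i '' P ∩ S j '' P = {v} ∧ v ∈ S i '' (V : Set (EuclideanSpace ℝ (Fin d))) ∧
      v ∈ S j '' (V : Set (EuclideanSpace ℝ (Fin d))))) ∧
  ((V : Set (EuclideanSpace ℝ (Fin d))) ⊆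
    ⋃ i, S i '' (V : Set (EuclideanSpace ℝ (Fin d))))

/-- The polyhedron data: `P` is a compact set homeomorphic to the closed `d`-ball, with
finite vertex set `V ⊆ P`. -/
def IsPolyhedronWithVertices {d : ℕ} (P : Set (EuclideanSpace ℝ (Fin d)))
    (V : Finset (EuclideanSpace ℝ (Fin d))) : Prop :=
  IsCompact P ∧ (V : Set (EuclideanSpace ℝ (Fin d))) ⊆ P ∧
    Nonempty (P ≃ₜ Metric.closedBall (0 : EuclideanSpace ℝ (Fin d)) 1)

/-- The composition `S_{j₁} ∘ ⋯ ∘ S_{jₙ}` associated to a multiindex `j`. -/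
def Sw {d : ℕ} {ι : Type*} (S : ι → EuclideanSpace ℝ (Fin d) → EuclideanSpace ℝ (Fin d)) :
    List ι → EuclideanSpace ℝ (Fin d) → EuclideanSpace ℝ (Fin d) :=
  fun l => l.foldr (fun i f => S i ∘ f) id

open Set

section Aux

variable {d m : ℕ} {ι : Type*}

lemma Sw_nil (S : ι → EuclideanSpace ℝ (Fin d) → EuclideanSpace ℝ (Fin d)) :
    Sw S ([] : List ι) = id := rfl

lemma Sw_cons (S : ι → EuclideanSpace ℝ (Fin d) → EuclideanSpace ℝ (Fin d)) (a : ι)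
    (l : List ι) : Sw S (a :: l) = S a ∘ Sw S l := rfl

lemma Sw_append (S : ι → EuclideanSpace ℝ (Fin d) → EuclideanSpace ℝ (Fin d))
    (l₁ l₂ : List ι) : Sw S (l₁ ++ l₂) = Sw S l₁ ∘ Sw S l₂ := by
  induction l₁ with
  | nil => rfl
  | cons a l ih => simp [Sw_cons, List.cons_append, ih, Function.comp_assoc]

lemma Sw_ratio (S : ι → EuclideanSpace ℝ (Fin d) → EuclideanSpace ℝ (Fin d))
    (hS : ∀ i, ∃ r ∈ Set.Ioo (0 : ℝ) 1, ∀ x y, dist (S i x) (S i y) = r * dist x y)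
    (l : List ι) :
    ∃ r : ℝ, 0 < r ∧ r ≤ 1 ∧ (l ≠ [] → r < 1) ∧
      ∀ x y, dist (Sw S l x) (Sw S l y) = r * dist x y := by
  induction l with
  | nil => exact ⟨1, one_pos, le_refl 1, fun h => absurd rfl h, fun x y => (one_mul _).symm⟩
  | cons a l ih =>
    obtain ⟨r, hr, hr1, _, hdist⟩ := ih
    obtain ⟨r₀, ⟨hr₀, hr₀1⟩, hdist₀⟩ := hS a
    refine ⟨r₀ * r, mul_pos hr₀ hr, ?_, fun _ => ?_, fun x y => ?_⟩
    · nlinarith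
    · nlinarith
    · simp only [Sw_cons, Function.comp_apply, hdist₀, hdist, mul_assoc]

lemma Sw_image_subset (S : ι → EuclideanSpace ℝ (Fin d) → EuclideanSpace ℝ (Fin d))
    (P : Set (EuclideanSpace ℝ (Fin d))) (hsub : ∀ i, S i '' P ⊆ P) (l : List ι) :
    Sw S l '' P ⊆ P := by
  induction l with
  | nil => simp [Sw_nil]
  | cons a l ih =>
    rw [Sw_cons, Set.image_comp]
    exact (Set.image_mono ih).trans (hsub a)

lemma exists_two_points {d : ℕ} (hd : 0 < d) {P : Set (EuclideanSpace ℝ (Fin d))}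
    {V : Finset (EuclideanSpace ℝ (Fin d))} (hP : IsPolyhedronWithVertices P V) :
    ∃ x ∈ P, ∃ y ∈ P, x ≠ y := by
  obtain ⟨e⟩ := hP.2.2
  set b1 : EuclideanSpace ℝ (Fin d) := EuclideanSpace.single ⟨0, hd⟩ (1 : ℝ) with hb1
  have h0 : (0 : EuclideanSpace ℝ (Fin d)) ∈ Metric.closedBall (0 : EuclideanSpace ℝ (Fin d)) 1 := by
    simp
  have h1 : b1 ∈ Metric.closedBall (0 : EuclideanSpace ℝ (Fin d)) 1 := by
    simp [hb1, EuclideanSpace.norm_single]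
  have hne : b1 ≠ 0 := by
    intro h
    have := congrArg (fun v : EuclideanSpace ℝ (Fin d) => v ⟨0, hd⟩) h
    simp [hb1, EuclideanSpace.single_apply] at this
  refine ⟨(e.symm ⟨0, h0⟩ : P), (e.symm ⟨0, h0⟩ : P).2, (e.symm ⟨b1, h1⟩ : P),
    (e.symm ⟨b1, h1⟩ : P).2, ?_⟩
  intro h
  have := e.symm.injective (Subtype.ext h : e.symm ⟨0, h0⟩ = e.symm ⟨b1, h1⟩)
  exact hne (congrArg Subtype.val this).symm

end Aux

theorem stmt_7 {d m : ℕ} (hd : 0 < d) (P : Set (EuclideanSpace ℝ (Fin d)))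
    (V : Finset (EuclideanSpace ℝ (Fin d)))
    (S : Fin m → EuclideanSpace ℝ (Fin d) → EuclideanSpace ℝ (Fin d))
    (hP : IsPolyhedronWithVertices P V)
    (hS : IsPPolyhedralSystem P V S)
    (i j : List (Fin m)) :
    Sw S j '' P ⊆ Sw S i '' P ↔ i <+: j := by
  obtain ⟨x, hx, y, hy, hxy⟩ := exists_two_points hd hP
  obtain ⟨hcontr, hsub, hinter, _⟩ := hS
  constructor
  · intro h
    induction i generalizing j with
    | nil => exact List.nil_prefix
    | cons a i' ih =>
      match j with
      | [] =>
        exfalso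
        -- P ⊆ Sw S (a::i') '' P, a contraction: diameter contradiction
        have hPsub : P ⊆ Sw S (a :: i') '' P := by simpa [Sw_nil] using h
        obtain ⟨r, hr0, _, hr1, hdist⟩ := Sw_ratio S hcontr (a :: i')
        have hr1 := hr1 (by simp)
        have hbd : Bornology.IsBounded P := hP.1.isBounded
        have hdpos : 0 < Metric.diam P :=
          lt_of_lt_of_le (dist_pos.2 hxy) (Metric.dist_le_diam_of_mem hbd hx hy)
        have him : Metric.diam (Sw S (a :: i') '' P) ≤ r * Metric.diam P := by
          apply Metric.diam_le_of_forall_dist_le (by positivity)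
          rintro u ⟨p, hp, rfl⟩ v ⟨q, hq, rfl⟩
          rw [hdist]
          exact mul_le_mul_of_nonneg_left (Metric.dist_le_diam_of_mem hbd hp hq) hr0.le
        have hbdim : Bornology.IsBounded (Sw S (a :: i') '' P) := by
          rw [Metric.isBounded_iff]
          exact ⟨r * Metric.diam P, fun u hu v hv => by
            obtain ⟨p, hp, rfl⟩ := hu; obtain ⟨q, hq, rfl⟩ := hv
            rw [hdist]
            exact mul_le_mul_of_nonneg_left (Metric.dist_le_diam_of_mem hbd hp hq) hr0.le⟩
        have := (Metric.diam_mono hPsub hbdim).trans him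
        nlinarith
      | b :: j' =>
        by_cases hab : a = b
        · subst hab
          have hinj : Function.Injective (S a) := by
            obtain ⟨r₀, ⟨hr₀, _⟩, hd₀⟩ := hcontr a
            intro u v huv
            have h2 : dist (S a u) (S a v) = r₀ * dist u v := hd₀ u v
            rw [huv, dist_self] at h2
            exact dist_eq_zero.mp ((mul_eq_zero.mp h2.symm).resolve_left hr₀.ne')
          have h' : Sw S j' '' P ⊆ Sw S i' '' P := by
            rw [Sw_cons, Sw_cons, Set.image_comp, Set.image_comp] at h
            exact (Set.image_subset_image_iff hinj).mp h
          obtain ⟨k, hk⟩ := ih j' h'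
          exact ⟨k, by simp [← hk]⟩
        · exfalso
          -- Sw S (b::j') '' P ⊆ S a '' P ∩ S b '' P, at most a point, but has ≥ 2 pts
          obtain ⟨r, hr0, _, _, hdist⟩ := Sw_ratio S hcontr (b :: j')
          have h2a : Sw S (b :: j') '' P ⊆ S a '' P := by
            refine h.trans ?_
            rw [Sw_cons, Set.image_comp]
            exact Set.image_mono (Sw_image_subset S P hsub i')
          have h2b : Sw S (b :: j') '' P ⊆ S b '' P := by
            rw [Sw_cons, Set.image_comp]
            exact Set.image_mono (Sw_image_subset S P hsub j')
          have hxy' : Sw S (b :: j') x ≠ Sw S (b :: j') y := by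
            intro hh
            apply hxy
            have := hdist x y
            rw [hh, dist_self] at this
            have : dist x y = 0 := by
              rcases mul_eq_zero.mp this.symm with h | h
              · exact absurd h hr0.ne'
              · exact h
            exact dist_eq_zero.mp this
          have hmx : Sw S (b :: j') x ∈ S a '' P ∩ S b '' P :=
            ⟨h2a ⟨x, hx, rfl⟩, h2b ⟨x, hx, rfl⟩⟩
          have hmy : Sw S (b :: j') y ∈ S a '' P ∩ S b '' P :=
            ⟨h2a ⟨y, hy, rfl⟩, h2b ⟨y, hy, rfl⟩⟩
          rcases hinter a b hab with hemp | ⟨v, hv, _, _⟩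
          · rw [hemp] at hmx; exact hmx
          · rw [hv] at hmx hmy
            exact hxy' (hmx.trans hmy.symm)
  · rintro ⟨k, rfl⟩
    rw [Sw_append, Set.image_comp]
    exact Set.image_mono (Sw_image_subset S P hsub k)
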